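/- If x₁, y₁, x₂, y₂ ≥ 1 with x₁ + y₁ = x₂ + y₂ and |x₁ − y₁| > |x₂ − y₂|, then for every p ≥ 2, (x₁^p + y₁^p)^(1/p) ≥ (x₂^p + y₂^p)^(1/p). -/

import Mathlib

lemma aux_pow (x₁ y₁ x₂ y₂ p : ℝ) (h0 : 0 ≤ y₁) (hy : y₁ ≤ y₂) (hx : x₂ ≤ x₁)
    (hyx : y₂ ≤ x₂) (hsum : x₁ + y₁ = x₂ + y₂) (hp : 1 ≤ p) :
    x₂ ^ p + y₂ ^ p ≤ x₁ ^ p + y₁ ^ p := by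
  have hcv := convexOn_rpow hp
  rcases eq_or_lt_of_le (hy.trans (hyx.trans hx)) with heq | hlt
  · have hx2 : x₂ = y₁ := le_antisymm (by linarith) (by linarith)
    have hy2 : y₂ = y₁ := le_antisymm (by linarith) (by linarith)
    have hx1 : x₁ = y₁ := heq.symm
    rw [hx2, hy2, hx1]
  · set t : ℝ := (x₂ - y₁) / (x₁ - y₁) with ht
    have hd : 0 < x₁ - y₁ := by linarith
    have ht0 : 0 ≤ t := div_nonneg (by linarith) hd.le
    have ht1 : t ≤ 1 := (div_le_one hd).2 (by linarith)
    have hmem1 : x₁ ∈ Set.Ici (0:ℝ) := by simp; linarith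
    have hmem2 : y₁ ∈ Set.Ici (0:ℝ) := by simpa using h0
    have e1 : t * x₁ + (1 - t) * y₁ = x₂ := by
      rw [ht]
      linear_combination (div_mul_cancel₀ (x₂ - y₁) hd.ne' : (x₂ - y₁) / (x₁ - y₁) * (x₁ - y₁) = x₂ - y₁)
    have e2 : (1 - t) * x₁ + t * y₁ = y₂ := by
      rw [ht]
      linear_combination hsum - (div_mul_cancel₀ (x₂ - y₁) hd.ne' : (x₂ - y₁) / (x₁ - y₁) * (x₁ - y₁) = x₂ - y₁)
    have c1 := hcv.2 hmem1 hmem2 ht0 (by linarith : (0:ℝ) ≤ 1 - t) (by ring)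
    have c2 := hcv.2 hmem1 hmem2 (by linarith : (0:ℝ) ≤ 1 - t) ht0 (by ring)
    simp only [smul_eq_mul] at c1 c2
    rw [e1] at c1
    rw [e2] at c2
    nlinarith [c1, c2]

theorem stmt_12 (x₁ y₁ x₂ y₂ : ℝ) (hx₁ : 1 ≤ x₁) (hy₁ : 1 ≤ y₁) (hx₂ : 1 ≤ x₂)
    (hy₂ : 1 ≤ y₂) (hsum : x₁ + y₁ = x₂ + y₂) (habs : |x₁ - y₁| > |x₂ - y₂|)
    (p : ℝ) (hp : 2 ≤ p) :
    (x₁ ^ p + y₁ ^ p) ^ (1 / p) ≥ (x₂ ^ p + y₂ ^ p) ^ (1 / p) := by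
  have hp1 : (1:ℝ) ≤ p := by linarith
  have key : x₂ ^ p + y₂ ^ p ≤ x₁ ^ p + y₁ ^ p := by
    rcases le_total y₁ x₁ with h1 | h1 <;> rcases le_total y₂ x₂ with h2 | h2
    · rw [abs_of_nonneg (by linarith), abs_of_nonneg (by linarith)] at habs
      exact aux_pow x₁ y₁ x₂ y₂ p (by linarith) (by linarith) (by linarith)
        (by linarith) hsum hp1
    · rw [abs_of_nonneg (by linarith), abs_of_nonpos (by linarith)] at habs
      have := aux_pow x₁ y₁ y₂ x₂ p (by linarith) (by linarith) (by linarith)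
        (by linarith) (by linarith) hp1
      linarith
    · rw [abs_of_nonpos (by linarith), abs_of_nonneg (by linarith)] at habs
      have := aux_pow y₁ x₁ x₂ y₂ p (by linarith) (by linarith) (by linarith)
        (by linarith) (by linarith) hp1
      linarith
    · rw [abs_of_nonpos (by linarith), abs_of_nonpos (by linarith)] at habs
      have := aux_pow y₁ x₁ y₂ x₂ p (by linarith) (by linarith) (by linarith)
        (by linarith) (by linarith) hp1
      linarith
  have h0 : 0 ≤ x₂ ^ p + y₂ ^ p := by positivity
  exact Real.rpow_le_rpow h0 key (by positivity)
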